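/- Let s = 2 and let P be a valid path from (0,0) to (nr, 2n) with n ≥ 2. Write the prefix of P up to and including its second N-step as E^a N E^b N. Then a + b ≤ r. -/

import Mathlib

/-- The vector of a step: `true` is an east step `E=(1,0)`, `false` is a north step `N=(0,1)`. -/
def stepVec (b : Bool) : ℤ × ℤ := if b then (1, 0) else (0, 1)

/-- The point of the lattice path reached after the first `i` steps, starting at `start`. -/
def pathPoint (start : ℤ × ℤ) (steps : List Bool) (i : ℕ) : ℤ × ℤ :=
  start + ((steps.take i).map stepVec).sum

/-- The path with step list `steps` starting at `start` ends at `fin`. -/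
def IsPathFrom (start fin : ℤ × ℤ) (steps : List Bool) : Prop :=
  pathPoint start steps steps.length = fin

/-- Validity of a lattice path with respect to the equivalence `v ~ v + ℓ(r,s)`:
whenever the path enters a point `v` with an `E`-step, every later point of the path
in the class of `v` is also entered with an `E`-step. -/
def Valid (r s : ℤ) (start : ℤ × ℤ) (steps : List Bool) : Prop :=
  ∀ i j, i < j → ∀ (hi : i < steps.length) (hj : j < steps.length),
    (∃ ℓ : ℤ, pathPoint start steps (j + 1) - pathPoint start steps (i + 1) = (ℓ * r, ℓ * s)) →
    steps.get ⟨i, hi⟩ = true → steps.get ⟨j, hj⟩ = true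

lemma sum_map_stepVec (l : List Bool) :
    (l.map stepVec).sum = ((l.count true : ℤ), (l.count false : ℤ)) := by
  induction l with
  | nil => simp; rfl
  | cons b t ih => cases b <;> simp [stepVec, ih, List.count_cons, Prod.ext_iff] <;> ring

lemma pathPoint_eq (steps : List Bool) (m : ℕ) :
    pathPoint (0,0) steps m = (((steps.take m).count true : ℤ), ((steps.take m).count false : ℤ)) := by
  rw [pathPoint, sum_map_stepVec]; simp

lemma hits (f : ℕ → ℕ) (h0 : f 0 = 0) (hstep : ∀ m, f (m+1) ≤ f m + 1) :
    ∀ N y, y ≤ f N → ∃ m ≤ N, f m = y := by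
  intro N
  induction N with
  | zero => intro y hy; exact ⟨0, le_refl _, by omega⟩
  | succ N ih =>
    intro y hy
    by_cases h : y ≤ f N
    · obtain ⟨m, hm, hm2⟩ := ih y h
      exact ⟨m, by omega, hm2⟩
    · exact ⟨N+1, le_refl _, by have := hstep N; omega⟩

lemma take_succ_count (l : List Bool) (m : ℕ) (c : Bool) (h : m < l.length) :
    (l.take (m+1)).count c = (l.take m).count c + if l.get ⟨m, h⟩ = c then 1 else 0 := by
  rw [List.take_succ, List.count_append, List.getElem?_eq_getElem h]
  simp [List.count_singleton']

lemma take_succ_count_le (l : List Bool) (m : ℕ) (c : Bool) :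
    (l.take (m+1)).count c ≤ (l.take m).count c + 1 := by
  rcases lt_or_ge m l.length with h | h
  · rw [take_succ_count l m c h]; split <;> omega
  · rw [List.take_of_length_le (by omega), List.take_of_length_le h]; omega

lemma count_take_mono (l : List Bool) (c : Bool) {m m' : ℕ} (h : m ≤ m') :
    (l.take m).count c ≤ (l.take m').count c := by
  have h2 : l.take m = (l.take m').take m := by rw [List.take_take, min_eq_left h]
  rw [h2]
  exact (List.take_sublist _ _).count_le _

lemma count_bool (l : List Bool) : l.count true + l.count false = l.length := by
  induction l with
  | nil => simp
  | cons b t ih => cases b <;> simp [List.count_cons] <;> omega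


/-- for `s = 2`, a valid path from `(0,0)` to `(nr,2n)` with prefix
`E^a N E^b N` up to its second `N`-step satisfies `a + b ≤ r`. -/
theorem prefix_bound (r n : ℕ) (hr : 0 < r) (hn : 2 ≤ n)
    (a b : ℕ) (rest : List Bool)
    (steps : List Bool)
    (hform : steps = List.replicate a true ++ [false] ++ List.replicate b true ++ [false] ++ rest)
    (hpath : IsPathFrom (0, 0) ((n * r : ℤ), (2 * n : ℤ)) steps)
    (hvalid : Valid r 2 (0, 0) steps) :
    a + b ≤ r := by
  by_contra hcon
  push_neg at hcon
  set L := steps.length with hLdef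
  set cf : ℕ → ℕ := fun m => (steps.take m).count false with hcfdef
  set ct : ℕ → ℕ := fun m => (steps.take m).count true with hctdef
  have hcf0 : cf 0 = 0 := by simp [hcfdef]
  have hct0 : ct 0 = 0 := by simp [hctdef]
  have hcfstep : ∀ m, cf (m+1) ≤ cf m + 1 := fun m => take_succ_count_le steps m false
  have hcfmono : ∀ {m m'}, m ≤ m' → cf m ≤ cf m' := fun h => count_take_mono steps false h
  have hctmono : ∀ {m m'}, m ≤ m' → ct m ≤ ct m' := fun h => count_take_mono steps true h
  have hsum : ∀ m, m ≤ L → ct m + cf m = m := by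
    intro m hm
    have := count_bool (steps.take m)
    rwa [List.length_take, min_eq_left hm] at this
  -- totals
  have htot : ct L = n * r ∧ cf L = 2 * n := by
    have h1 := hpath
    rw [IsPathFrom, pathPoint_eq] at h1
    have h2 := congrArg Prod.fst h1
    have h3 := congrArg Prod.snd h1
    simp at h2 h3
    constructor
    · show (steps.take L).count true = n * r
      rw [hLdef, List.take_length]
      exact_mod_cast h2
    · show (steps.take L).count false = 2 * n
      rw [hLdef, List.take_length]
      exact_mod_cast h3
  -- existence of prefixes with given number of N steps
  have hex : ∀ y, y ≤ 2*n → ∃ m ≤ L, cf m = y := by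
    intro y hy
    exact hits cf hcf0 hcfstep L y (htot.2 ▸ hy)
  set u : ℕ → ℕ := fun y => sInf {m | cf m = y} with hudef
  have hu_mem : ∀ y, y ≤ 2*n → cf (u y) = y := by
    intro y hy
    obtain ⟨m, _, hm⟩ := hex y hy
    exact Nat.sInf_mem (⟨m, hm⟩ : Set.Nonempty {m | cf m = y})
  have hu_le : ∀ y, y ≤ 2*n → u y ≤ L := by
    intro y hy
    obtain ⟨m, hmL, hm⟩ := hex y hy
    exact le_trans (Nat.sInf_le hm) hmL
  have hu_min : ∀ y m, m < u y → cf m ≠ y := by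
    intro y m hm
    exact Nat.notMem_of_lt_sInf (s := {m | cf m = y}) hm
  have hu_mono : ∀ {y y'}, y < y' → y' ≤ 2*n → u y < u y' := by
    intro y y' h h'
    by_contra hc
    push_neg at hc
    have h2 := hcfmono hc
    rw [hu_mem y' h', hu_mem y (by omega)] at h2
    omega
  have hu0 : u 0 = 0 := Nat.eq_zero_of_le_zero (Nat.sInf_le hcf0)
  -- S y = x-coordinate where the path enters row y
  set S : ℕ → ℕ := fun y => ct (u y) with hSdef
  have hS0 : S 0 = 0 := by rw [hSdef]; simp only; rw [hu0, hct0]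
  have hSu : ∀ y, y ≤ 2*n → S y + y = u y := by
    intro y hy
    have := hsum (u y) (hu_le y hy)
    rw [hu_mem y hy] at this
    exact this
  have hSmono : ∀ {y y'}, y ≤ y' → y' ≤ 2*n → S y ≤ S y' := by
    intro y y' h h'
    rcases eq_or_lt_of_le h with rfl | h
    · exact le_refl _
    · exact hctmono (hu_mono h h').le
  -- the N step entering row y
  have hN : ∀ y, 1 ≤ y → y ≤ 2*n → ∃ j, ∃ (hj : j < L), j + 1 = u y ∧ cf j + 1 = y ∧
      steps.get ⟨j, hj⟩ = false := by
    intro y h1 h2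
    have hpos : 0 < u y := by
      rcases Nat.eq_zero_or_pos (u y) with h | h
      · have h3 := hu_mem y h2; rw [h, hcf0] at h3; omega
      · exact h
    have hjL : u y - 1 < L := by have := hu_le y h2; omega
    have hj1 : (u y - 1) + 1 = u y := by omega
    have hne := hu_min y (u y - 1) (by omega)
    have hle := hcfstep (u y - 1)
    have hmem : cf ((u y - 1) + 1) = y := by rw [hj1]; exact hu_mem y h2
    have hmo : cf (u y - 1) ≤ cf ((u y - 1)+1) := hcfmono (by omega)
    have hcfj : cf (u y - 1) + 1 = y := by omega
    refine ⟨u y - 1, hjL, hj1, hcfj, ?_⟩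
    have hsc := take_succ_count steps (u y - 1) false hjL
    cases hg : steps.get ⟨u y - 1, hjL⟩ with
    | false => rfl
    | true =>
      rw [hg] at hsc; simp at hsc
      have : cf ((u y - 1) + 1) = cf (u y - 1) := hsc
      omega
  -- the E steps within row y
  have hE : ∀ y m, y + 1 ≤ 2*n → u y ≤ m → m + 1 < u (y+1) →
      ∃ (hm : m < L), steps.get ⟨m, hm⟩ = true ∧ cf (m+1) = y ∧ ct (m+1) + y = m + 1 := by
    intro y m hy h1 h2
    obtain ⟨j, hjL, hj1, hcfj, hgj⟩ := hN (y+1) (by omega) hy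
    have hm1j : m + 1 ≤ j := by omega
    have hmL : m < L := by omega
    have hcfm1 : cf (m+1) = y := by
      have hlo : y ≤ cf (m+1) := by
        have := hcfmono (le_trans h1 (by omega) : u y ≤ m + 1)
        rw [hu_mem y (by omega)] at this; exact this
      have hhi : cf (m+1) ≤ cf j := hcfmono hm1j
      omega
    have hcfm : cf m = y := by
      have hlo : y ≤ cf m := by
        have := hcfmono h1
        rw [hu_mem y (by omega)] at this; exact this
      have := hcfmono (show m ≤ m + 1 by omega)
      omega
    have hgm : steps.get ⟨m, hmL⟩ = true := by
      have hsc := take_succ_count steps m false hmL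
      cases hg : steps.get ⟨m, hmL⟩ with
      | true => rfl
      | false =>
        rw [hg] at hsc; simp at hsc
        have : cf (m+1) = cf m + 1 := hsc
        omega
    have hctm : ct (m+1) + y = m + 1 := by
      have := hsum (m+1) (by have := hu_le (y+1) hy; omega)
      omega
    exact ⟨hmL, hgm, hcfm1, hctm⟩
  -- validity applied with ℓ = 1
  have key : ∀ i j (hi : i < L) (hj : j < L), i < j → steps.get ⟨i, hi⟩ = true →
      steps.get ⟨j, hj⟩ = false → ct (j+1) = ct (i+1) + r → cf (j+1) = cf (i+1) + 2 → False := by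
    intro i j hi hj hij hti htj hct1 hcf2
    have hv := hvalid i j hij hi hj ⟨1, by
      rw [pathPoint_eq, pathPoint_eq, Prod.mk_sub_mk, Prod.mk.injEq]
      have h1 : (steps.take (j+1)).count true = (steps.take (i+1)).count true + r := hct1
      have h2 : (steps.take (j+1)).count false = (steps.take (i+1)).count false + 2 := hcf2
      constructor
      · push_cast [h1]; ring
      · push_cast [h2]; ring⟩ hti
    rw [htj] at hv
    exact Bool.false_ne_true hv
  -- main step
  have step : ∀ k, k + 2 ≤ 2*n → S k + (r+1) ≤ S (k+2) → S (k+1) + (r+1) ≤ S (k+2) := by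
    intro k hk h
    by_contra hc
    push_neg at hc
    obtain ⟨j, hjL, hj1, hcfj, hgj⟩ := hN (k+2) (by omega) hk
    have hSj : ct (j+1) = S (k+2) := by rw [hj1]
    have hc' : S (k+2) ≤ S (k+1) + r := by omega
    set x := S (k+2) - r with hx
    have hxr : x + r = S (k+2) := by omega
    have hx1 : S k + 1 ≤ x := by omega
    have hx2 : x ≤ S (k+1) := by omega
    set m := x + k - 1 with hmdef
    have hm1 : m + 1 = x + k := by omega
    have h1 : u k ≤ m := by have := hSu k (by omega); omega
    have h2 : m + 1 < u (k+1) := by have := hSu (k+1) (by omega); omega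
    obtain ⟨hmL, hgm, hcfm, hctm⟩ := hE k m (by omega) h1 h2
    have hij : m < j := by
      have := hu_mono (show k+1 < k+2 by omega) hk
      omega
    refine key m j hmL hjL hij hgm hgj ?_ ?_
    · omega
    · have hcfj1 : cf (j+1) = k + 2 := by rw [hj1]; exact hu_mem (k+2) hk
      omega
  -- compute u 2 and S 2 from the explicit prefix
  have hpre2 : steps = ((List.replicate a true ++ [false]) ++ List.replicate b true ++ [false]) ++ rest := by
    rw [hform]
  have hlen2 : ((List.replicate a true ++ [false]) ++ List.replicate b true ++ [false]).length = a + b + 2 := by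
    simp; omega
  have htk2 : steps.take (a+b+2) = (List.replicate a true ++ [false]) ++ List.replicate b true ++ [false] := by
    rw [hpre2, ← hlen2, List.take_left]
  have hpre1 : steps = ((List.replicate a true ++ [false]) ++ List.replicate b true) ++ ([false] ++ rest) := by
    rw [hform]; simp
  have hlen1 : ((List.replicate a true ++ [false]) ++ List.replicate b true).length = a + b + 1 := by
    simp; omega
  have htk1 : steps.take (a+b+1) = (List.replicate a true ++ [false]) ++ List.replicate b true := by
    rw [hpre1, ← hlen1, List.take_left]
  have hcfab2 : cf (a+b+2) = 2 := by
    show (steps.take (a+b+2)).count false = 2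
    rw [htk2]; simp [List.count_replicate]
  have hcfab1 : cf (a+b+1) = 1 := by
    show (steps.take (a+b+1)).count false = 1
    rw [htk1]; simp [List.count_replicate]
  have hu2 : u 2 = a + b + 2 := by
    refine le_antisymm (Nat.sInf_le hcfab2) ?_
    by_contra hcc
    push_neg at hcc
    have h1 := hu_mem 2 (by omega)
    have h2 : cf (u 2) ≤ cf (a+b+1) := hcfmono (by omega)
    omega
  have hS2 : S 2 = a + b := by
    show ct (u 2) = a + b
    rw [hu2]
    show (steps.take (a+b+2)).count true = a + b
    rw [htk2]; simp [List.count_replicate]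
  -- the chain of inequalities
  have chain : ∀ k, k + 2 ≤ 2*n → S (k+1) + (r+1) ≤ S (k+2) := by
    intro k
    induction k with
    | zero =>
      intro h2
      refine step 0 h2 ?_
      have e : S (0+2) = S 2 := rfl
      omega
    | succ k ih =>
      intro h
      have h' := ih (by omega)
      refine step (k+1) h ?_
      have e2 : S (k+1+2) = S (k+3) := rfl
      have hmono := hSmono (show k+2 ≤ k+3 by omega) (show k+3 ≤ 2*n by omega)
      omega
  have growth : ∀ k, k + 2 ≤ 2*n → S 2 + k*(r+1) ≤ S (k+2) := by
    intro k
    induction k with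
    | zero => intro _; simp
    | succ k ih =>
      intro h
      have h1 := ih (by omega)
      have h2 := chain (k+1) h
      have e1 : S (k+1+1) = S (k+2) := rfl
      have e2 : S (k+1+2) = S (k+3) := rfl
      have hm : (k+1)*(r+1) = k*(r+1) + (r+1) := by ring
      omega
  have hfin := growth (2*n-2) (by omega)
  have h2n : 2*n - 2 + 2 = 2*n := by omega
  rw [h2n] at hfin
  have hSL : S (2*n) ≤ n * r := by
    have : ct (u (2*n)) ≤ ct L := hctmono (hu_le (2*n) (le_refl _))
    rw [htot.1] at this
    exact this
  obtain ⟨p, rfl⟩ : ∃ p, n = p + 2 := ⟨n - 2, by omega⟩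
  have hk2 : 2*(p+2) - 2 = 2*p + 2 := by omega
  rw [hk2] at hfin
  have harith : (2*p+2)*(r+1) + (r+1) ≤ (p+2)*r := by omega
  have e1 : (2*p+2)*(r+1) + (r+1) = 2*(p*r) + 2*p + 3*r + 3 := by ring
  have e2 : (p+2)*r = p*r + 2*r := by ring
  omega
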